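/- Let n, m, l, d be positive integers, A : ℂⁿ → ℂᵐ a linear map, R_t : ℂⁿ → ℂˡ linear maps for t = 0,…,d−1, f ∈ ℝᵐ with f(j) ≥ 0 for all j, and τ, η > 0. Define Υ(u, D, α) = (1/2)·Σ_{t<d} ‖D·α_t − R_t u‖² + τ·‖α‖₀ + (η/2)·Σ_{j<m} ( |(Au)(j)|² − f(j)·log(|(Au)(j)|²) ) for u ∈ ℂⁿ, D ∈ M_l(ℂ), α ∈ M_{l×d}(ℂ) with columns α_t. Assume there exists c > 0 such that c·‖u‖ ≤ ‖Au‖ for all u ∈ ℂⁿ. If (u^k, D^k, α^k) is a sequence such that every D^k is unitary ((D^k)ᴴ D^k = I) and Υ(u^k, D^k, α^k) ≤ C for all k and some constant C, then there exists M such that ‖u^k‖ ≤ M and ‖α^k‖_F ≤ M for all k. -/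

import Mathlib

open Matrix

/-- The isotropic `L⁰` pseudo-norm of a complex matrix: the number of its nonzero
entries, as a real number. -/
noncomputable def isoL0 {c d : ℕ} (α : Matrix (Fin c) (Fin d) ℂ) : ℝ :=
  (Nat.card {p : Fin c × Fin d // α p.1 p.2 ≠ 0} : ℝ)

/-- Kullback–Leibler-type lower bound: `x - f·log x ≥ x/2 - max (f·log(2f) - f) 0`. -/
lemma dicpr_klb (f x : ℝ) (hf : 0 ≤ f) (hx : 0 ≤ x) :
    x / 2 - max (f * Real.log (2 * f) - f) 0 ≤ x - f * Real.log x := by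
  rcases hf.eq_or_lt with hf0 | hf0
  · rw [← hf0]; simp only [zero_mul, zero_sub, mul_zero, sub_zero]; simp; linarith
  rcases hx.eq_or_lt with hx0 | hx0
  · rw [← hx0]; simp
  have h2f : 0 < 2 * f := by linarith
  have key : f * Real.log x ≤ x / 2 + (f * Real.log (2 * f) - f) := by
    have h := Real.log_le_sub_one_of_pos (show (0:ℝ) < x / (2*f) by positivity)
    rw [Real.log_div hx0.ne' h2f.ne'] at h
    have : Real.log x ≤ x / (2*f) - 1 + Real.log (2*f) := by linarith
    calc f * Real.log x ≤ f * (x / (2*f) - 1 + Real.log (2*f)) :=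
          mul_le_mul_of_nonneg_left this hf
      _ = x / 2 + (f * Real.log (2*f) - f) := by field_simp; ring
  have := le_max_left (f * Real.log (2*f) - f) (0:ℝ)
  linarith

/-- A unitary matrix preserves the sum of squared moduli. -/
lemma dicpr_unitary_sum {l : ℕ} (D : Matrix (Fin l) (Fin l) ℂ) (hD : Dᴴ * D = 1)
    (v : Fin l → ℂ) :
    ∑ s, ‖(D.mulVec v) s‖ ^ 2 = ∑ s, ‖v s‖ ^ 2 := by
  have key : (star (D.mulVec v)) ⬝ᵥ (D.mulVec v) = (star v) ⬝ᵥ v := by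
    rw [star_mulVec, dotProduct_mulVec, vecMul_vecMul, hD, vecMul_one]
  have expand : ∀ (w : Fin l → ℂ),
      (star w) ⬝ᵥ w = ((∑ s, ‖w s‖ ^ 2 : ℝ) : ℂ) := by
    intro w
    simp only [dotProduct, Pi.star_apply, Complex.star_def, Complex.ofReal_sum]
    congr 1; ext s
    rw [Complex.sq_norm, ← Complex.mul_conj]; ring
  have := key
  rw [expand, expand] at this
  exact_mod_cast this

/-- Boundedness of the iterates for the dictionary learning phase retrieval (DicPR)
objective: if every dictionary iterate is unitary and the objective values are
uniformly bounded, then the image iterates and coefficient iterates are bounded. -/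
theorem dicpr_iterates_bounded {n m l d : ℕ} (hn : 0 < n) (hm : 0 < m) (hl : 0 < l)
    (hd : 0 < d)
    (A : EuclideanSpace ℂ (Fin n) →ₗ[ℂ] EuclideanSpace ℂ (Fin m))
    (R : Fin d → (EuclideanSpace ℂ (Fin n) →ₗ[ℂ] EuclideanSpace ℂ (Fin l)))
    (f : Fin m → ℝ) (hf : ∀ j, 0 ≤ f j)
    (τ η : ℝ) (hτ : 0 < τ) (hη : 0 < η)
    (c : ℝ) (hc : 0 < c) (hA : ∀ u : EuclideanSpace ℂ (Fin n), c * ‖u‖ ≤ ‖A u‖)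
    (C : ℝ)
    (u : ℕ → EuclideanSpace ℂ (Fin n))
    (D : ℕ → Matrix (Fin l) (Fin l) ℂ)
    (α : ℕ → Matrix (Fin l) (Fin d) ℂ)
    (hD : ∀ k, (D k)ᴴ * D k = 1)
    (hC : ∀ k,
      (1 / 2) * ∑ t : Fin d,
          ‖(EuclideanSpace.equiv (Fin l) ℂ).symm ((D k).mulVec fun s => α k s t)
              - R t (u k)‖ ^ 2
        + τ * isoL0 (α k)
        + (η / 2) * ∑ j : Fin m,
            (‖A (u k) j‖ ^ 2
              - f j * Real.log (‖A (u k) j‖ ^ 2)) ≤ C) :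
    ∃ M : ℝ, ∀ k, ‖u k‖ ≤ M ∧
      Real.sqrt (∑ s : Fin l, ∑ t : Fin d, ‖α k s t‖ ^ 2) ≤ M := by
  -- Notation for the three terms
  set S : ℕ → ℝ := fun k => ∑ t : Fin d,
      ‖(EuclideanSpace.equiv (Fin l) ℂ).symm ((D k).mulVec fun s => α k s t)
          - R t (u k)‖ ^ 2 with hS
  set KL : ℕ → ℝ := fun k => ∑ j : Fin m,
      (‖A (u k) j‖ ^ 2
        - f j * Real.log (‖A (u k) j‖ ^ 2)) with hKLdef
  set B : ℝ := ∑ j : Fin m, max (f j * Real.log (2 * f j) - f j) 0 with hBdef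
  have hB0 : 0 ≤ B := Finset.sum_nonneg fun j _ => le_max_right _ 0
  have hS0 : ∀ k, 0 ≤ S k := fun k => Finset.sum_nonneg fun t _ => by positivity
  have hiso0 : ∀ k, 0 ≤ isoL0 (α k) := fun k => Nat.cast_nonneg _
  -- norm squared of A u k as a sum
  have hnormA : ∀ k, ‖A (u k)‖ ^ 2 = ∑ j : Fin m, ‖A (u k) j‖ ^ 2 := by
    intro k
    rw [EuclideanSpace.norm_eq, Real.sq_sqrt (by positivity)]
  -- KL lower bound
  have hKL : ∀ k, ‖A (u k)‖ ^ 2 / 2 - B ≤ KL k := by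
    intro k
    calc ‖A (u k)‖ ^ 2 / 2 - B
        = ∑ j : Fin m, (‖A (u k) j‖ ^ 2 / 2
            - max (f j * Real.log (2 * f j) - f j) 0) := by
          rw [Finset.sum_sub_distrib, ← Finset.sum_div, ← hnormA]
      _ ≤ KL k := Finset.sum_le_sum fun j _ =>
          dicpr_klb (f j) _ (hf j) (by positivity)
  -- bound on ‖A u k‖²
  have h1 : ∀ k, ‖A (u k)‖ ^ 2 ≤ 4 * C / η + 2 * B := by
    intro k
    have h := hC k
    have h2 : (η / 2) * KL k ≤ C := by nlinarith [hS0 k, hiso0 k, hτ.le]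
    have h3 : (η / 2) * (‖A (u k)‖ ^ 2 / 2 - B) ≤ C :=
      le_trans (mul_le_mul_of_nonneg_left (hKL k) (by positivity)) h2
    have h4 : ‖A (u k)‖ ^ 2 / 2 - B ≤ 2 * C / η := by
      rw [le_div_iff₀ hη]; nlinarith
    have : 4 * C / η = 2 * (2 * C / η) := by ring
    rw [this]; linarith
  set Q : ℝ := 4 * C / η + 2 * B with hQdef
  have hQ0 : 0 ≤ Q := le_trans (sq_nonneg _) (h1 0)
  set M₁ : ℝ := Real.sqrt Q / c with hM₁def
  have hM₁0 : 0 ≤ M₁ := by positivity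
  have hu : ∀ k, ‖u k‖ ≤ M₁ := by
    intro k
    have hAk : ‖A (u k)‖ ≤ Real.sqrt Q := by
      have := Real.sqrt_le_sqrt (h1 k)
      rwa [Real.sqrt_sq (norm_nonneg _)] at this
    rw [hM₁def, le_div_iff₀ hc]
    calc ‖u k‖ * c = c * ‖u k‖ := mul_comm _ _
      _ ≤ ‖A (u k)‖ := hA (u k)
      _ ≤ Real.sqrt Q := hAk
  -- bound on the representation term
  set E : ℝ := 2 * C + η * B with hEdef
  have hE : ∀ k, S k ≤ E := by
    intro k
    have h := hC k
    have hklb : -B ≤ KL k := le_trans (by nlinarith [sq_nonneg ‖A (u k)‖]) (hKL k)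
    nlinarith [hiso0 k, hτ.le, hη.le]
  -- operator norm bounds for R t
  set T : Fin d → ℝ := fun t => ‖LinearMap.toContinuousLinearMap (R t)‖ with hT
  have hRT : ∀ t (v : EuclideanSpace ℂ (Fin n)), ‖R t v‖ ≤ T t * ‖v‖ := by
    intro t v
    have := (LinearMap.toContinuousLinearMap (R t)).le_opNorm v
    simpa using this
  have hT0 : ∀ t, 0 ≤ T t := fun t => norm_nonneg _
  -- Frobenius bound
  set F : ℝ := 2 * E + 2 * ∑ t : Fin d, (T t * M₁) ^ 2 with hFdef
  have hαF : ∀ k, ∑ s : Fin l, ∑ t : Fin d, ‖α k s t‖ ^ 2 ≤ F := by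
    intro k
    rw [Finset.sum_comm]
    have step : ∀ t : Fin d, ∑ s : Fin l, ‖α k s t‖ ^ 2 ≤
        2 * ‖(EuclideanSpace.equiv (Fin l) ℂ).symm ((D k).mulVec fun s => α k s t)
              - R t (u k)‖ ^ 2 + 2 * (T t * M₁) ^ 2 := by
      intro t
      set w : EuclideanSpace ℂ (Fin l) :=
        (EuclideanSpace.equiv (Fin l) ℂ).symm ((D k).mulVec fun s => α k s t) with hw
      have hw2 : ‖w‖ ^ 2 = ∑ s : Fin l, ‖α k s t‖ ^ 2 := by
        rw [EuclideanSpace.norm_eq, Real.sq_sqrt (by positivity)]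
        have : ∀ s : Fin l, ‖w s‖ = ‖((D k).mulVec fun s => α k s t) s‖ :=
          fun s => rfl
        simp_rw [this]
        exact dicpr_unitary_sum (D k) (hD k) _
      rw [← hw2]
      have htri : ‖w‖ ≤ ‖w - R t (u k)‖ + ‖R t (u k)‖ := by
        calc ‖w‖ = ‖(w - R t (u k)) + R t (u k)‖ := by rw [sub_add_cancel]
          _ ≤ ‖w - R t (u k)‖ + ‖R t (u k)‖ := norm_add_le _ _
      have hr : ‖R t (u k)‖ ≤ T t * M₁ := by
        calc ‖R t (u k)‖ ≤ T t * ‖u k‖ := hRT t (u k)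
          _ ≤ T t * M₁ := mul_le_mul_of_nonneg_left (hu k) (hT0 t)
      nlinarith [norm_nonneg w, norm_nonneg (w - R t (u k)), norm_nonneg (R t (u k)),
        sq_nonneg (‖w - R t (u k)‖ - ‖R t (u k)‖)]
    calc ∑ t : Fin d, ∑ s : Fin l, ‖α k s t‖ ^ 2
        ≤ ∑ t : Fin d, (2 *
            ‖(EuclideanSpace.equiv (Fin l) ℂ).symm ((D k).mulVec fun s => α k s t)
              - R t (u k)‖ ^ 2 + 2 * (T t * M₁) ^ 2) :=
          Finset.sum_le_sum fun t _ => step t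
      _ = 2 * S k + 2 * ∑ t : Fin d, (T t * M₁) ^ 2 := by
          rw [Finset.sum_add_distrib, ← Finset.mul_sum, ← Finset.mul_sum]
      _ ≤ F := by
          have := hE k
          rw [hFdef]; linarith
  refine ⟨max M₁ (Real.sqrt F), fun k => ⟨le_trans (hu k) (le_max_left _ _), ?_⟩⟩
  exact le_trans (Real.sqrt_le_sqrt (hαF k)) (le_max_right _ _)
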